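/- Fix θ ∈ ℝ and an integer L ≥ 1. On ℋ = ℓ²(ℤ²; ℂ^L) define the unitary magnetic translations u₁, u₂ by (u₁ψ)(n) = ψ(n − e₁) and (u₂ψ)(n) = e^{iθn₁}·ψ(n − e₂), where n = (n₁,n₂) ∈ ℤ² and e₁ = (1,0), e₂ = (0,1). Let C be the componentwise complex conjugation on ℋ and set ū_j = C∘u_j∘C. On ℋ_ph = ℋ ⊕ ℋ define U_j = u_j ⊕ ū_j for j = 1, 2, and Q = 1 ⊕ (−1). If A is a bounded operator on ℋ_ph satisfying U_j·A·U_j* = A for j = 1, 2 and A·Q ≠ Q·A, then e^{4iθ} = 1, i.e. θ is an integer multiple of π/2. -/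

import Mathlib

noncomputable section
open scoped ENNReal

/-- Index set of ℓ²(ℤ²;ℂ^L). -/
abbrev SIdx (L : ℕ) : Type := (ℤ × ℤ) × Fin L

/-- The Hilbert space ℋ = ℓ²(ℤ²;ℂ^L). -/
abbrev HS (L : ℕ) : Type := lp (fun _ : SIdx L => ℂ) 2

/-- The operator ψ ↦ (i ↦ φ(i)·ψ(e(i))) on ℓ², for an index bijection `e` and a
unimodular phase function `φ`. -/
noncomputable def phaseShift {L : ℕ} (e : SIdx L ≃ SIdx L) (φ : SIdx L → ℂ)
    (hφ : ∀ i, ‖φ i‖ = 1) : HS L →L[ℂ] HS L :=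
  LinearMap.mkContinuous
    { toFun := fun ψ =>
        (⟨fun i => φ i • ψ (e i), by
          apply memℓp_gen
          have h2 : (0 : ℝ) < (2 : ℝ≥0∞).toReal := by norm_num
          have hs : Summable fun i => ‖ψ i‖ ^ (2 : ℝ≥0∞).toReal :=
            (lp.memℓp ψ).summable h2
          have hs' : Summable fun i => ‖ψ (e i)‖ ^ (2 : ℝ≥0∞).toReal :=
            e.summable_iff.2 hs
          exact hs'.congr fun i => by rw [norm_smul, hφ i, one_mul]⟩ : HS L)
      map_add' := fun ψ χ => by
        apply Subtype.ext
        funext i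
        simp only [lp.coeFn_add, Pi.add_apply, smul_eq_mul, mul_add]
      map_smul' := fun c ψ => by
        apply Subtype.ext
        funext i
        simp only [lp.coeFn_smul, Pi.smul_apply, smul_eq_mul, RingHom.id_apply]
        show φ i * (c * ψ (e i)) = (c • (fun j => φ j * ψ (e j) : ∀ _ : SIdx L, ℂ)) i
        simp only [Pi.smul_apply, smul_eq_mul]
        ring }
    1
    (fun ψ => by
      have h2 : (0 : ℝ) < (2 : ℝ≥0∞).toReal := by norm_num
      show ‖(⟨fun i => φ i • ψ (e i), _⟩ : HS L)‖ ≤ 1 * ‖ψ‖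
      rw [one_mul]
      apply le_of_eq
      rw [lp.norm_eq_tsum_rpow h2, lp.norm_eq_tsum_rpow h2]
      congr 1
      have : ∀ i, ‖φ i • ψ (e i)‖ ^ (2 : ℝ≥0∞).toReal
          = ‖ψ (e i)‖ ^ (2 : ℝ≥0∞).toReal := fun i => by
        rw [norm_smul, hφ i, one_mul]
      calc (∑' i, ‖φ i • ψ (e i)‖ ^ (2 : ℝ≥0∞).toReal)
          = ∑' i, ‖ψ (e i)‖ ^ (2 : ℝ≥0∞).toReal := by
            exact tsum_congr this
        _ = ∑' i, ‖ψ i‖ ^ (2 : ℝ≥0∞).toReal :=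
            e.tsum_eq (fun i => ‖ψ i‖ ^ (2 : ℝ≥0∞).toReal))

/-- The index translation (n,l) ↦ (n-v, l). -/
def transIdx (L : ℕ) (v : ℤ × ℤ) : SIdx L ≃ SIdx L :=
  (Equiv.subRight v).prodCongr (Equiv.refl (Fin L))

/-- The magnetic translation u₁ : (u₁ψ)(n) = ψ(n-e₁). -/
noncomputable def u1 (L : ℕ) : HS L →L[ℂ] HS L :=
  phaseShift (transIdx L (1, 0)) (fun _ => 1) (fun _ => by simp)

/-- The magnetic translation u₂ : (u₂ψ)(n) = e^{iθn₁}ψ(n-e₂), in the Landau gauge with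
flux θ = qB. -/
noncomputable def u2 (L : ℕ) (θ : ℝ) : HS L →L[ℂ] HS L :=
  phaseShift (transIdx L (0, 1))
    (fun i => Complex.exp ((θ * (i.1.1 : ℝ) : ℝ) * Complex.I))
    (fun i => by exact Complex.norm_exp_ofReal_mul_I _)

/-- Conjugation ā = C ∘ a ∘ C with C the componentwise complex conjugation. -/
noncomputable def conjOp {L : ℕ} (a : HS L →L[ℂ] HS L) : HS L →L[ℂ] HS L :=
  LinearMap.mkContinuous
    { toFun := fun ψ => star (a (star ψ))
      map_add' := fun x y => by simp [star_add, map_add]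
      map_smul' := fun c x => by simp [star_smul, _root_.map_smul] }
    ‖a‖
    (fun x => by
      show ‖star (a (star x))‖ ≤ ‖a‖ * ‖x‖
      rw [norm_star]
      exact (a.le_opNorm _).trans (by rw [norm_star]))

/-- The particle-hole Hilbert space ℋ_ph = ℋ ⊕ ℋ. -/
abbrev Hph (L : ℕ) : Type := WithLp 2 (HS L × HS L)

/-- The direct sum a ⊕ b of two operators, acting on ℋ_ph = ℋ ⊕ ℋ. -/
noncomputable def prodOp {L : ℕ} (a b : HS L →L[ℂ] HS L) : Hph L →L[ℂ] Hph L :=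
  (WithLp.prodContinuousLinearEquiv 2 ℂ (HS L) (HS L)).symm.toContinuousLinearMap ∘L
    (a.prodMap b) ∘L
      (WithLp.prodContinuousLinearEquiv 2 ℂ (HS L) (HS L)).toContinuousLinearMap

/-- The magnetic translations U_j = u_j ⊕ ū_j on the particle-hole space. -/
noncomputable def Uop (L : ℕ) (θ : ℝ) : Fin 2 → (Hph L →L[ℂ] Hph L)
  | 0 => prodOp (u1 L) (conjOp (u1 L))
  | 1 => prodOp (u2 L θ) (conjOp (u2 L θ))

/-- The charge operator Q = 1 ⊕ (-1) on the particle-hole space. -/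
noncomputable def Qop (L : ℕ) : Hph L →L[ℂ] Hph L := prodOp 1 (-1)
section Lemmas
open Complex
variable {L : ℕ}

@[simp] lemma phaseShift_apply (e : SIdx L ≃ SIdx L) (φ : SIdx L → ℂ)
    (hφ : ∀ i, ‖φ i‖ = 1) (ψ : HS L) (i : SIdx L) :
    phaseShift e φ hφ ψ i = φ i * ψ (e i) := rfl

lemma phaseShift_mul (e f : SIdx L ≃ SIdx L) (φ χ : SIdx L → ℂ)
    (hφ : ∀ i, ‖φ i‖ = 1) (hχ : ∀ i, ‖χ i‖ = 1) :
    phaseShift e φ hφ * phaseShift f χ hχ =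
      phaseShift (e.trans f) (fun i => φ i * χ (e i))
        (fun i => by rw [norm_mul, hφ i, hχ (e i), one_mul]) := by
  ext ψ i
  show φ i * ((phaseShift f χ hχ ψ) (e i)) = _
  show φ i * (χ (e i) * ψ (f (e i))) = φ i * χ (e i) * ψ ((e.trans f) i)
  rw [mul_assoc]
  rfl

lemma phaseShift_one :
    phaseShift (Equiv.refl (SIdx L)) (fun _ => 1) (fun _ => by simp) = 1 := by
  ext ψ i
  show (1 : ℂ) * ψ i = ψ i
  rw [one_mul]

lemma phaseShift_congr (e : SIdx L ≃ SIdx L) (φ χ : SIdx L → ℂ)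
    (hφ : ∀ i, ‖φ i‖ = 1) (hχ : ∀ i, ‖χ i‖ = 1) (h : ∀ i, φ i = χ i) :
    phaseShift e φ hφ = phaseShift e χ hχ := by
  have : φ = χ := funext h
  subst this
  rfl

lemma phaseShift_star (e : SIdx L ≃ SIdx L) (φ : SIdx L → ℂ)
    (hφ : ∀ i, ‖φ i‖ = 1) :
    star (phaseShift e φ hφ) =
      phaseShift e.symm (fun j => starRingEnd ℂ (φ (e.symm j)))
        (fun j => by rw [RingHomIsometric.norm_map]; exact hφ _) := by
  rw [ContinuousLinearMap.star_eq_adjoint]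
  symm
  rw [ContinuousLinearMap.eq_adjoint_iff]
  intro x y
  rw [lp.inner_eq_tsum, lp.inner_eq_tsum]
  simp only [RCLike.inner_apply]
  trans (∑' j, φ (e.symm j) * (starRingEnd ℂ) (x (e.symm j)) * y j)
  · exact tsum_congr fun j => by
      show y j * (starRingEnd ℂ) ((starRingEnd ℂ) (φ (e.symm j)) * x (e.symm j)) = _
      simp only [map_mul, Complex.conj_conj]
      ring
  · rw [← Equiv.tsum_eq e (fun j => φ (e.symm j) * (starRingEnd ℂ) (x (e.symm j)) * y j)]
    exact tsum_congr fun i => by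
      show φ (e.symm (e i)) * (starRingEnd ℂ) (x (e.symm (e i))) * y (e i)
          = (φ i * y (e i)) * (starRingEnd ℂ) (x i)
      rw [e.symm_apply_apply]
      ring
end Lemmas
section Lemmas2
variable {L : ℕ}

lemma phaseShift_smul (c : ℂ) (hc : ‖c‖ = 1) (e : SIdx L ≃ SIdx L)
    (φ : SIdx L → ℂ) (hφ : ∀ i, ‖φ i‖ = 1) :
    phaseShift e (fun i => c * φ i) (fun i => by rw [norm_mul, hc, hφ i, one_mul])
      = c • phaseShift e φ hφ := by
  ext ψ i
  show c * φ i * ψ (e i) = (c • (phaseShift e φ hφ ψ)) i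
  rw [lp.coeFn_smul]
  show c * φ i * ψ (e i) = c * (φ i * ψ (e i))
  ring

lemma conjOp_phaseShift (e : SIdx L ≃ SIdx L) (φ : SIdx L → ℂ)
    (hφ : ∀ i, ‖φ i‖ = 1) :
    conjOp (phaseShift e φ hφ) =
      phaseShift e (fun i => starRingEnd ℂ (φ i))
        (fun i => by rw [RingHomIsometric.norm_map]; exact hφ i) := by
  ext ψ i
  show (star (phaseShift e φ hφ (star ψ)) : HS L) i = _
  rw [lp.coeFn_star]
  show star ((phaseShift e φ hφ (star ψ)) i) = (starRingEnd ℂ) (φ i) * ψ (e i)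
  rw [phaseShift_apply]
  show star (φ i * (star ψ : HS L) (e i)) = _
  rw [lp.coeFn_star]
  show star (φ i * star (ψ (e i))) = _
  simp [star_mul, mul_comm]

lemma prodOp_apply {a b : HS L →L[ℂ] HS L} (x : Hph L) :
    prodOp a b x = (WithLp.equiv 2 (HS L × HS L)).symm (a x.fst, b x.snd) := rfl

lemma prodOp_fst {a b : HS L →L[ℂ] HS L} (x : Hph L) :
    (prodOp a b x).fst = a x.fst := rfl

lemma prodOp_snd {a b : HS L →L[ℂ] HS L} (x : Hph L) :
    (prodOp a b x).snd = b x.snd := rfl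

lemma prodOp_mul (a b c d : HS L →L[ℂ] HS L) :
    prodOp a b * prodOp c d = prodOp (a * c) (b * d) := by
  ext x
  · rfl

lemma prodOp_one : prodOp (L := L) 1 1 = 1 := by
  ext x
  · rfl

lemma prodOp_star (a b : HS L →L[ℂ] HS L) :
    star (prodOp a b) = prodOp (star a) (star b) := by
  rw [ContinuousLinearMap.star_eq_adjoint]
  symm
  rw [ContinuousLinearMap.eq_adjoint_iff]
  intro x y
  rw [WithLp.prod_inner_apply, WithLp.prod_inner_apply]
  rw [ContinuousLinearMap.star_eq_adjoint, ContinuousLinearMap.star_eq_adjoint]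
  show inner ℂ ((ContinuousLinearMap.adjoint a) x.fst) y.fst
      + inner ℂ ((ContinuousLinearMap.adjoint b) x.snd) y.snd
      = inner ℂ x.fst (a y.fst) + inner ℂ x.snd (b y.snd)
  rw [ContinuousLinearMap.adjoint_inner_left, ContinuousLinearMap.adjoint_inner_left]

end Lemmas2
section Lemmas3
variable {L : ℕ}

lemma phaseShift_star_mul_self (e : SIdx L ≃ SIdx L) (φ : SIdx L → ℂ)
    (hφ : ∀ i, ‖φ i‖ = 1) :
    star (phaseShift e φ hφ) * phaseShift e φ hφ = 1 := by
  rw [phaseShift_star, phaseShift_mul, ← phaseShift_one]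
  rw [Equiv.symm_trans_self]
  apply phaseShift_congr
  intro i
  have : (starRingEnd ℂ) (φ (e.symm i)) * φ (e.symm i) = 1 := by
    rw [mul_comm, Complex.mul_conj]
    rw [Complex.normSq_eq_norm_sq]
    rw [show ‖φ (e.symm i)‖ = 1 from hφ _]
    norm_num
  simpa using this

lemma phaseShift_mul_star_self (e : SIdx L ≃ SIdx L) (φ : SIdx L → ℂ)
    (hφ : ∀ i, ‖φ i‖ = 1) :
    phaseShift e φ hφ * star (phaseShift e φ hφ) = 1 := by
  rw [phaseShift_star, phaseShift_mul, ← phaseShift_one]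
  rw [Equiv.self_trans_symm]
  apply phaseShift_congr
  intro i
  rw [e.symm_apply_apply]
  have : φ i * (starRingEnd ℂ) (φ i) = 1 := by
    rw [Complex.mul_conj]
    rw [Complex.normSq_eq_norm_sq]
    rw [show ‖φ i‖ = 1 from hφ _]
    norm_num
  simpa using this

end Lemmas3
section Lemmas4
variable {L : ℕ}

lemma conjOp_u1 : conjOp (u1 L) = u1 L := by
  rw [u1, conjOp_phaseShift]
  apply phaseShift_congr
  intro i
  simp

lemma conjOp_u2 (θ : ℝ) : conjOp (u2 L θ) = u2 L (-θ) := by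
  rw [u2, conjOp_phaseShift, u2]
  apply phaseShift_congr
  intro i
  rw [← Complex.exp_conj]
  congr 1
  simp only [map_mul, Complex.conj_ofReal, Complex.conj_I]
  push_cast
  ring

lemma transIdx_trans_comm (v w : ℤ × ℤ) :
    (transIdx L v).trans (transIdx L w) = (transIdx L w).trans (transIdx L v) := by
  apply Equiv.ext
  intro i
  show (i.1 - v - w, i.2) = (i.1 - w - v, i.2)
  rw [sub_right_comm]

lemma u1_mul_u2 (θ : ℝ) :
    u1 L * u2 L θ = Complex.exp (-(θ : ℂ) * Complex.I) • (u2 L θ * u1 L) := by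
  rw [u1, u2, phaseShift_mul, phaseShift_mul,
    ← phaseShift_smul (Complex.exp (-(θ : ℂ) * Complex.I))
      (by rw [show -(θ:ℂ) * Complex.I = ((-θ : ℝ) : ℂ) * Complex.I by push_cast; ring]
          exact Complex.norm_exp_ofReal_mul_I _)]
  rw [transIdx_trans_comm]
  apply phaseShift_congr
  intro i
  rw [one_mul, mul_one, ← Complex.exp_add]
  congr 1
  have : ((transIdx L (1, 0)) i).1.1 = i.1.1 - 1 := rfl
  rw [this]
  push_cast
  ring

end Lemmas4
section Lemmas5
variable {L : ℕ}

/-- Injection into the first summand. -/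
noncomputable def jmap1 (L : ℕ) : HS L →L[ℂ] Hph L :=
  (WithLp.prodContinuousLinearEquiv 2 ℂ (HS L) (HS L)).symm.toContinuousLinearMap ∘L
    ContinuousLinearMap.inl ℂ (HS L) (HS L)

noncomputable def jmap2 (L : ℕ) : HS L →L[ℂ] Hph L :=
  (WithLp.prodContinuousLinearEquiv 2 ℂ (HS L) (HS L)).symm.toContinuousLinearMap ∘L
    ContinuousLinearMap.inr ℂ (HS L) (HS L)

lemma jmap1_fst (ψ : HS L) : (jmap1 L ψ).fst = ψ := rfl
lemma jmap1_snd (ψ : HS L) : (jmap1 L ψ).snd = 0 := rfl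
lemma jmap2_fst (ψ : HS L) : (jmap2 L ψ).fst = 0 := rfl
lemma jmap2_snd (ψ : HS L) : (jmap2 L ψ).snd = ψ := rfl

lemma hph_ext {x y : Hph L} (h1 : x.fst = y.fst) (h2 : x.snd = y.snd) : x = y := by
  have : x = WithLp.toLp 2 (x.fst, x.snd) := rfl
  rw [this, h1, h2]
  rfl

lemma hph_decomp (x : Hph L) : x = jmap1 L x.fst + jmap2 L x.snd := by
  apply hph_ext
  · show x.fst = x.fst + 0
    rw [add_zero]
  · show x.snd = 0 + x.snd
    rw [zero_add]

lemma prodOp_jmap2 (u w : HS L →L[ℂ] HS L) (ψ : HS L) :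
    prodOp u w (jmap2 L ψ) = jmap2 L (w ψ) := by
  apply hph_ext
  · show u 0 = 0
    exact map_zero u
  · rfl

lemma prodOp_jmap1 (u w : HS L →L[ℂ] HS L) (ψ : HS L) :
    prodOp u w (jmap1 L ψ) = jmap1 L (u ψ) := by
  apply hph_ext
  · rfl
  · show w 0 = 0
    exact map_zero w

noncomputable def pmap1 (L : ℕ) : Hph L →L[ℂ] HS L :=
  ContinuousLinearMap.fst ℂ (HS L) (HS L) ∘L
    (WithLp.prodContinuousLinearEquiv 2 ℂ (HS L) (HS L)).toContinuousLinearMap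

noncomputable def pmap2 (L : ℕ) : Hph L →L[ℂ] HS L :=
  ContinuousLinearMap.snd ℂ (HS L) (HS L) ∘L
    (WithLp.prodContinuousLinearEquiv 2 ℂ (HS L) (HS L)).toContinuousLinearMap

lemma pmap1_apply (x : Hph L) : pmap1 L x = x.fst := rfl
lemma pmap2_apply (x : Hph L) : pmap2 L x = x.snd := rfl

/-- The off-diagonal blocks of A. -/
noncomputable def blockB (A : Hph L →L[ℂ] Hph L) : HS L →L[ℂ] HS L :=
  pmap1 L ∘L A ∘L jmap2 L

noncomputable def blockC (A : Hph L →L[ℂ] Hph L) : HS L →L[ℂ] HS L :=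
  pmap2 L ∘L A ∘L jmap1 L

lemma blockB_apply (A : Hph L →L[ℂ] Hph L) (ψ : HS L) :
    blockB A ψ = (A (jmap2 L ψ)).fst := rfl

lemma blockC_apply (A : Hph L →L[ℂ] Hph L) (ψ : HS L) :
    blockC A ψ = (A (jmap1 L ψ)).snd := rfl

end Lemmas5
section Lemmas6
variable {L : ℕ}

lemma block_rel_B (u w : HS L →L[ℂ] HS L) (A : Hph L →L[ℂ] Hph L)
    (h : prodOp u w * A = A * prodOp u w) :
    u * blockB A = blockB A * w := by
  apply ContinuousLinearMap.ext
  intro ψ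
  have h' := congrArg (fun T => T (jmap2 L ψ)) h
  simp only [ContinuousLinearMap.mul_apply] at h'
  show u (blockB A ψ) = blockB A (w ψ)
  calc u (blockB A ψ) = (prodOp u w (A (jmap2 L ψ))).fst := (prodOp_fst _).symm
    _ = (A (prodOp u w (jmap2 L ψ))).fst := by rw [h']
    _ = (A (jmap2 L (w ψ))).fst := by rw [prodOp_jmap2]
    _ = blockB A (w ψ) := rfl

lemma block_rel_C (u w : HS L →L[ℂ] HS L) (A : Hph L →L[ℂ] Hph L)
    (h : prodOp u w * A = A * prodOp u w) :
    w * blockC A = blockC A * u := by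
  apply ContinuousLinearMap.ext
  intro ψ
  have h' := congrArg (fun T => T (jmap1 L ψ)) h
  simp only [ContinuousLinearMap.mul_apply] at h'
  show w (blockC A ψ) = blockC A (u ψ)
  calc w (blockC A ψ) = (prodOp u w (A (jmap1 L ψ))).snd := (prodOp_snd _).symm
    _ = (A (prodOp u w (jmap1 L ψ))).snd := by rw [h']
    _ = (A (jmap1 L (u ψ))).snd := by rw [prodOp_jmap1]
    _ = blockC A (u ψ) := rfl

lemma u1_mul_star : u1 L * star (u1 L) = 1 := by
  rw [u1]; exact phaseShift_mul_star_self _ _ _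

lemma u2_mul_star (θ : ℝ) : u2 L θ * star (u2 L θ) = 1 := by
  rw [u2]; exact phaseShift_mul_star_self _ _ _

lemma neg_coe_exp (θ : ℝ) :
    Complex.exp (-(((-θ : ℝ)) : ℂ) * Complex.I) = Complex.exp ((θ:ℂ) * Complex.I) := by
  congr 1
  push_cast
  ring

lemma key_exp (θ : ℝ) (b : HS L →L[ℂ] HS L) (h1 : u1 L * b = b * u1 L)
    (h2 : u2 L θ * b = b * u2 L (-θ)) (hb : b ≠ 0) :
    ∃ n : ℤ, θ = n * Real.pi := by
  set S : HS L →L[ℂ] HS L := b * u2 L (-θ) * u1 L with hS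
  have pathA : u1 L * (u2 L θ * b) = Complex.exp (-(θ:ℂ) * Complex.I) • S := by
    rw [← mul_assoc, u1_mul_u2 θ, smul_mul_assoc]
    congr 1
    rw [mul_assoc, h1, ← mul_assoc, h2]
  have pathB : u1 L * (u2 L θ * b) = Complex.exp ((θ:ℂ) * Complex.I) • S := by
    rw [h2, ← mul_assoc, h1, mul_assoc, u1_mul_u2 (-θ), neg_coe_exp, mul_smul_comm,
      hS, mul_assoc]
  have hSne : S ≠ 0 := by
    intro h0
    apply hb
    have : b = S * star (u1 L) * star (u2 L (-θ)) := by
      rw [hS, mul_assoc (b * u2 L (-θ)), u1_mul_star, mul_one, mul_assoc,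
        u2_mul_star, mul_one]
    rw [this, h0, zero_mul, zero_mul]
  have heq : Complex.exp (-(θ:ℂ) * Complex.I) = Complex.exp ((θ:ℂ) * Complex.I) := by
    have hsub : (Complex.exp (-(θ:ℂ) * Complex.I) - Complex.exp ((θ:ℂ) * Complex.I)) • S = 0 := by
      rw [sub_smul, ← pathA, ← pathB, sub_self]
    rcases smul_eq_zero.mp hsub with h | h
    · exact sub_eq_zero.mp h
    · exact absurd h hSne
  have h2θ : Complex.exp (2 * (θ:ℂ) * Complex.I) = 1 := by
    have hr : 2 * (θ:ℂ) * Complex.I = (θ:ℂ) * Complex.I + (θ:ℂ) * Complex.I := by ring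
    rw [hr, Complex.exp_add]
    nth_rewrite 1 [← heq]
    rw [← Complex.exp_add]
    simp
  rw [Complex.exp_eq_one_iff] at h2θ
  obtain ⟨n, hn⟩ := h2θ
  refine ⟨n, ?_⟩
  have hI : (2 * (θ:ℂ)) * Complex.I = ((n:ℂ) * (2 * Real.pi)) * Complex.I := by
    rw [hn]; ring
  have h2 : 2 * (θ:ℂ) = (n:ℂ) * (2 * Real.pi) :=
    mul_right_cancel₀ Complex.I_ne_zero hI
  have : (θ:ℂ) = (n:ℂ) * (Real.pi : ℂ) := by linear_combination h2 / 2
  exact_mod_cast this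

lemma blocks_ne (A : Hph L →L[ℂ] Hph L) (hQ : A * Qop L ≠ Qop L * A) :
    blockB A ≠ 0 ∨ blockC A ≠ 0 := by
  by_contra h
  push_neg at h
  obtain ⟨hB, hC⟩ := h
  apply hQ
  apply ContinuousLinearMap.ext
  intro x
  have hBz : ∀ ψ, (A (jmap2 L ψ)).fst = 0 := fun ψ => by
    have := congrArg (fun T => T ψ) hB
    simpa [blockB_apply] using this
  have hCz : ∀ ψ, (A (jmap1 L ψ)).snd = 0 := fun ψ => by
    have := congrArg (fun T => T ψ) hC
    simpa [blockC_apply] using this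
  show A (Qop L x) = Qop L (A x)
  have hQx : Qop L x = jmap1 L x.fst + jmap2 L (-x.snd) := by
    apply hph_ext
    · show (1 : HS L →L[ℂ] HS L) x.fst = x.fst + 0
      rw [add_zero]; rfl
    · show (-1 : HS L →L[ℂ] HS L) x.snd = 0 + (-x.snd)
      rw [zero_add]; rfl
  rw [hQx, map_add]
  have hx : A x = A (jmap1 L x.fst) + A (jmap2 L x.snd) := by
    rw [← map_add, ← hph_decomp]
  apply hph_ext
  · show (A (jmap1 L x.fst)).fst + (A (jmap2 L (-x.snd))).fst = (1 : HS L →L[ℂ] HS L) ((A x).fst)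
    rw [hBz, hx]
    show (A (jmap1 L x.fst)).fst + 0 = (A (jmap1 L x.fst)).fst + (A (jmap2 L x.snd)).fst
    rw [hBz]
  · show (A (jmap1 L x.fst)).snd + (A (jmap2 L (-x.snd))).snd = (-1 : HS L →L[ℂ] HS L) ((A x).snd)
    have hneg : (A (jmap2 L (-x.snd))).snd = -((A (jmap2 L x.snd)).snd) := by
      rw [map_neg (jmap2 L), map_neg A]
      rfl
    rw [hCz, zero_add, hneg, hx]
    show -((A (jmap2 L x.snd)).snd)
        = -((A (jmap1 L x.fst) + A (jmap2 L x.snd)).snd)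
    have hadd : (A (jmap1 L x.fst) + A (jmap2 L x.snd)).snd
        = (A (jmap1 L x.fst)).snd + (A (jmap2 L x.snd)).snd := rfl
    rw [hadd, hCz, zero_add]

end Lemmas6
/-- Proposition 3.1: if a bounded operator A on ℋ_ph is covariant,
U_j·A·U_j* = A for j = 1,2, and does not commute with the charge operator Q, then
e^{4iθ} = 1, i.e. θ = qB is an integer multiple of π/2. -/
theorem covariant_charge_nonconservation (L : ℕ) (hL : 1 ≤ L) (θ : ℝ)
    (A : Hph L →L[ℂ] Hph L)
    (hcov : ∀ j : Fin 2, Uop L θ j * A * star (Uop L θ j) = A)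
    (hQ : A * Qop L ≠ Qop L * A) :
    Complex.exp (4 * (θ : ℂ) * Complex.I) = 1 ∧
      ∃ k : ℤ, θ = k * (Real.pi / 2) := by
  have hU : ∀ j : Fin 2, star (Uop L θ j) * Uop L θ j = 1 := by
    intro j
    fin_cases j
    · show star (prodOp (u1 L) (conjOp (u1 L))) * prodOp (u1 L) (conjOp (u1 L)) = 1
      rw [conjOp_u1, prodOp_star, prodOp_mul]
      simp only [u1]
      rw [phaseShift_star_mul_self, prodOp_one]
    · show star (prodOp (u2 L θ) (conjOp (u2 L θ))) * prodOp (u2 L θ) (conjOp (u2 L θ)) = 1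
      rw [conjOp_u2, prodOp_star, prodOp_mul]
      simp only [u2]
      rw [phaseShift_star_mul_self, phaseShift_star_mul_self, prodOp_one]
  have hcomm : ∀ j : Fin 2, Uop L θ j * A = A * Uop L θ j := by
    intro j
    have h : Uop L θ j * A * star (Uop L θ j) * Uop L θ j = A * Uop L θ j := by
      rw [hcov j]
    rwa [mul_assoc (Uop L θ j * A), hU j, mul_one] at h
  have hc0 : prodOp (u1 L) (u1 L) * A = A * prodOp (u1 L) (u1 L) := by
    have h := hcomm 0
    rwa [show Uop L θ 0 = prodOp (u1 L) (conjOp (u1 L)) from rfl, conjOp_u1] at h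
  have hc1 : prodOp (u2 L θ) (u2 L (-θ)) * A = A * prodOp (u2 L θ) (u2 L (-θ)) := by
    have h := hcomm 1
    rwa [show Uop L θ 1 = prodOp (u2 L θ) (conjOp (u2 L θ)) from rfl, conjOp_u2] at h
  have hpi : ∃ n : ℤ, θ = n * Real.pi := by
    rcases blocks_ne A hQ with hb | hc
    · exact key_exp θ (blockB A) (block_rel_B _ _ _ hc0) (block_rel_B _ _ _ hc1) hb
    · have hC2 : u2 L (-θ) * blockC A = blockC A * u2 L (-(-θ)) := by
        rw [neg_neg]
        exact block_rel_C _ _ _ hc1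
      obtain ⟨n, hn⟩ := key_exp (-θ) (blockC A) (block_rel_C _ _ _ hc0) hC2 hc
      exact ⟨-n, by push_cast; linarith⟩
  obtain ⟨n, hn⟩ := hpi
  constructor
  · rw [hn]
    rw [show 4 * (((n : ℝ) * Real.pi : ℝ) : ℂ) * Complex.I
        = ((2 * n : ℤ) : ℂ) * (2 * Real.pi * Complex.I) by push_cast; ring]
    exact Complex.exp_int_mul_two_pi_mul_I (2 * n)
  · exact ⟨2 * n, by rw [hn]; push_cast; ring⟩
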